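/- The function λ_1(p) = (1−p/2)log(1−p/2) − (p/2)log(p/2) − (1−p)log(1−p) on [0,1] attains its maximum at p = 1 − 1/√5, and the maximum value equals log((1+√5)/2). -/

import Mathlib

/-- The one-dimensional monomer-dimer entropy function with dimer density `p`,
`λ₁(p) = (1-p/2)log(1-p/2) - (p/2)log(p/2) - (1-p)log(1-p)`
(with the convention `log 0 = 0`, giving the continuous extension with
`λ₁(0) = λ₁(1) = 0`). -/
noncomputable def lambdaOne (p : ℝ) : ℝ :=
  (1 - p / 2) * Real.log (1 - p / 2) - (p / 2) * Real.log (p / 2)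
    - (1 - p) * Real.log (1 - p)

/-- The Gibbs-type inequality `x - y ≤ x log(x/y)` for `x ≥ 0`, `y > 0`. -/
lemma klog (x y : ℝ) (hx : 0 ≤ x) (hy : 0 < y) : x - y ≤ x * Real.log (x / y) := by
  rcases eq_or_lt_of_le hx with h | h
  · simp [← h]; linarith
  · have hl := Real.log_le_sub_one_of_pos (show (0:ℝ) < y / x from div_pos hy h)
    have hlog : Real.log (x / y) = - Real.log (y / x) := by
      rw [← Real.log_inv]; congr 1; field_simp
    have h1 : x * Real.log (y / x) ≤ x * (y / x - 1) :=
      mul_le_mul_of_nonneg_left hl hx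
    have h2 : x * (y / x - 1) = y - x := by field_simp
    rw [hlog]; nlinarith

lemma mul_log_div' (x y : ℝ) (hy : y ≠ 0) :
    x * Real.log (x / y) = x * Real.log x - x * Real.log y := by
  rcases eq_or_ne x 0 with rfl | hx
  · simp
  · rw [Real.log_div hx hy]; ring

/-- The abstract entropy bound: if `b + c = a`, `2b + c = 1` and `φ² = φ + 1` then
`a log a - b log b - c log c ≤ log φ`. -/
lemma key_entropy (a b c φ : ℝ) (ha : 0 < a) (hb : 0 ≤ b) (hc : 0 ≤ c) (hφ0 : 0 < φ)
    (hφ2 : φ ^ 2 = φ + 1) (habc : b + c = a) (h1 : 2 * b + c = 1) :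
    a * Real.log a - b * Real.log b - c * Real.log c ≤ Real.log φ := by
  have k1 := klog b (a / φ ^ 2) hb (by positivity)
  have k2 := klog c (a / φ) hc (by positivity)
  rw [mul_log_div' b (a / φ ^ 2) (by positivity)] at k1
  rw [mul_log_div' c (a / φ) (by positivity)] at k2
  have la2 : Real.log (a / φ ^ 2) = Real.log a - 2 * Real.log φ := by
    rw [Real.log_div ha.ne' (by positivity), Real.log_pow]; push_cast; ring
  have la1 : Real.log (a / φ) = Real.log a - Real.log φ := Real.log_div ha.ne' hφ0.ne'
  rw [la2] at k1
  rw [la1] at k2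
  have e1 : b * Real.log b - b * (Real.log a - 2 * Real.log φ)
      = b * Real.log b - b * Real.log a + 2 * (b * Real.log φ) := by ring
  have e2 : c * Real.log c - c * (Real.log a - Real.log φ)
      = c * Real.log c - c * Real.log a + c * Real.log φ := by ring
  have hsum : a / φ ^ 2 + a / φ = a := by
    field_simp
    linear_combination (-1) * hφ2
  have hbc : b * Real.log a + c * Real.log a = a * Real.log a := by
    rw [← add_mul, habc]
  have h2bc : 2 * (b * Real.log φ) + c * Real.log φ = Real.log φ := by
    linear_combination Real.log φ * h1
  linarith [k1, k2, e1, e2, hsum, hbc, h2bc]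

lemma lambdaOne_le (p : ℝ) (hp0 : 0 ≤ p) (hp1 : p ≤ 1) :
    lambdaOne p ≤ Real.log ((1 + Real.sqrt 5) / 2) := by
  have hs : Real.sqrt 5 * Real.sqrt 5 = 5 := Real.mul_self_sqrt (by norm_num)
  have hs0 : (2:ℝ) < Real.sqrt 5 := by nlinarith [Real.sqrt_nonneg 5]
  have hφ2 : ((1 + Real.sqrt 5) / 2) ^ 2 = (1 + Real.sqrt 5) / 2 + 1 := by
    field_simp
    linear_combination hs
  exact key_entropy (1 - p / 2) (p / 2) (1 - p) ((1 + Real.sqrt 5) / 2)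
    (by linarith) (by linarith) (by linarith) (by linarith) hφ2 (by ring) (by ring)

lemma lambdaOne_val : lambdaOne (1 - 1 / Real.sqrt 5) = Real.log ((1 + Real.sqrt 5) / 2) := by
  have hs : Real.sqrt 5 * Real.sqrt 5 = 5 := Real.mul_self_sqrt (by norm_num)
  have hs0 : (2:ℝ) < Real.sqrt 5 := by nlinarith [Real.sqrt_nonneg 5]
  set s := Real.sqrt 5 with hs_def
  set φ : ℝ := (1 + s) / 2 with hφ_def
  have hφ0 : (0:ℝ) < φ := by rw [hφ_def]; linarith
  have hs0' : (0:ℝ) < s := by linarith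
  have e1 : 1 - (1 - 1 / s) / 2 = φ / s := by rw [hφ_def]; field_simp; ring
  have e2 : (1 - 1 / s) / 2 = 1 / (φ * s) := by
    rw [hφ_def]; field_simp; linear_combination hs
  have e3 : 1 - (1 - 1 / s) = 1 / s := by ring
  unfold lambdaOne
  rw [e1, e2, e3]
  rw [Real.log_div hφ0.ne' hs0'.ne', one_div, one_div, Real.log_inv, Real.log_inv,
      Real.log_mul hφ0.ne' hs0'.ne']
  have c1 : φ / s + (φ * s)⁻¹ = 1 := by
    rw [hφ_def]; field_simp; linear_combination (-1) * hs
  have c2 : -(φ / s) + (φ * s)⁻¹ + s⁻¹ = 0 := by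
    rw [hφ_def]; field_simp; linear_combination (-1) * hs
  linear_combination Real.log φ * c1 + Real.log s * c2

/-- `λ₁` attains its maximum over `[0,1]` at `p = 1 - 1/√5`, with maximum value
`log((1+√5)/2)`. -/
theorem stmt11 :
    (1 - 1 / Real.sqrt 5) ∈ Set.Icc (0 : ℝ) 1 ∧
    IsMaxOn lambdaOne (Set.Icc (0 : ℝ) 1) (1 - 1 / Real.sqrt 5) ∧
    lambdaOne (1 - 1 / Real.sqrt 5) = Real.log ((1 + Real.sqrt 5) / 2) := by
  have hs : Real.sqrt 5 * Real.sqrt 5 = 5 := Real.mul_self_sqrt (by norm_num)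
  have hs0 : (2:ℝ) < Real.sqrt 5 := by nlinarith [Real.sqrt_nonneg 5]
  have hinv : 0 < 1 / Real.sqrt 5 ∧ 1 / Real.sqrt 5 < 1 := by
    constructor
    · positivity
    · rw [div_lt_one (by linarith)]; linarith
  refine ⟨⟨by linarith [hinv.2], by linarith [hinv.1]⟩, ?_, lambdaOne_val⟩
  intro x hx
  simp only [Set.mem_setOf_eq]
  rw [lambdaOne_val]
  exact lambdaOne_le x hx.1 hx.2
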